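/- For a finite graded module M over a standard-graded Artinian algebra A with Hilbert function H(M), and any linear form ℓ ∈ A_1, the Jordan type satisfies P_{ℓ,M} ≤ P_c(H(M)) in the dominance partial order, where P_c(H(M)) is the contiguous partition of H(M). -/

import Mathlib

set_option linter.unusedSectionVars false

/-! ### Partitions, dominance order, Jordan type -/

/-- Sum of the `i` largest parts of a partition given as a multiset. -/
noncomputable def partialSum (P : Multiset ℕ) (i : ℕ) : ℕ :=
  ((P.sort (· ≤ ·)).reverse.take i).sum

/-- Dominance partial order on partitions (given as multisets of parts). -/
def DomLE (P Q : Multiset ℕ) : Prop := ∀ i, partialSum P i ≤ partialSum Q i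

/-- The conjugate partition (switch rows and columns of the Ferrers diagram);
since it is defined through the multiset of parts, it incorporates the
nonincreasing rearrangement. -/
noncomputable def conjugatePartition (P : Multiset ℕ) : Multiset ℕ :=
  ((Multiset.range P.sum).map fun i => (P.filter fun p => i < p).card).filter (0 < ·)

/-- The Jordan type of a (nilpotent) endomorphism `f` of a finite-dimensional
vector space: the multiset of sizes of the Jordan blocks of `f`.  The number of
blocks of size `p` is `rank f^(p-1) - 2 rank f^p + rank f^(p+1)`. -/
noncomputable def jordanType (k : Type*) {V : Type*} [Field k] [AddCommGroup V] [Module k V]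
    (f : Module.End k V) : Multiset ℕ :=
  (Multiset.range (Module.finrank k V)).bind fun p =>
    Multiset.replicate
      (Module.finrank k (LinearMap.range (f ^ p)) +
        Module.finrank k (LinearMap.range (f ^ (p + 2))) -
        2 * Module.finrank k (LinearMap.range (f ^ (p + 1)))) (p + 1)
/-! ### The contiguous partition `P_c(H)` of a Hilbert function -/

/-- The contiguous partition of `H` (with support contained in `[0,N]`):
its parts are the lengths of the maximal contiguous row segments of the
bar graph of `H`; the row at height `r+1` occupies the columns `i` with
`H i ≥ r+1`, and a maximal segment starting at column `i` has length
`min {L | H (i+L) < r+1}`. -/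
noncomputable def contiguousPartition (H : ℕ → ℕ) (N : ℕ) : Multiset ℕ :=
  (Multiset.range ((Finset.range (N + 1)).sup H)).bind fun r =>
    (Multiset.range (N + 1)).filterMap fun i =>
      if (r + 1 ≤ H i) ∧ (i = 0 ∨ H (i - 1) < r + 1) then
        some (sInf {L | H (i + L) < r + 1})
      else none

/-! ### Auxiliary list lemmas -/

lemma list_sum_le (L : List ℕ) (t : ℕ) : L.sum ≤ L.length * t + (L.map (· - t)).sum := by
  induction L with
  | nil => simp
  | cons a L ih =>
    simp only [List.sum_cons, List.length_cons, List.map_cons, add_mul, one_mul]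
    omega

lemma list_sum_eq (L : List ℕ) (t : ℕ) (h : ∀ x ∈ L, t ≤ x) :
    L.length * t + (L.map (· - t)).sum = L.sum := by
  induction L with
  | nil => simp
  | cons a L ih =>
    have := h a (by simp)
    have := ih (fun x hx => h x (by simp [hx]))
    simp only [List.sum_cons, List.length_cons, List.map_cons, add_mul, one_mul]
    omega

lemma list_sum_zero (L : List ℕ) (t : ℕ) (h : ∀ x ∈ L, x ≤ t) :
    (L.map (· - t)).sum = 0 := by
  induction L with
  | nil => simp
  | cons a L ih =>
    have := h a (by simp)
    have := ih (fun x hx => h x (by simp [hx]))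
    simp only [List.map_cons, List.sum_cons]
    omega

lemma msum_eq (P : Multiset ℕ) (f : ℕ → ℕ) :
    (P.map f).sum = (((P.sort (· ≤ ·)).reverse).map f).sum := by
  rw [List.map_reverse, List.sum_reverse]
  conv_lhs => rw [← Multiset.sort_eq (s := P) (r := (· ≤ ·))]
  rw [Multiset.map_coe, Multiset.sum_coe]

/-! ### L0 and L1: partial sums vs truncated sums -/

lemma partialSum_le_mul_add (P : Multiset ℕ) (i t : ℕ) :
    partialSum P i ≤ i * t + (P.map (· - t)).sum := by
  set l := (P.sort (· ≤ ·)).reverse with hl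
  rw [msum_eq P _, ← hl, partialSum, ← hl]
  calc (l.take i).sum ≤ (l.take i).length * t + ((l.take i).map (· - t)).sum := list_sum_le _ _
    _ ≤ i * t + (l.map (· - t)).sum := by
        have h1 : (l.take i).length ≤ i := by simp [List.length_take]
        have h2 : ((l.take i).map (· - t)).sum ≤ (l.map (· - t)).sum := by
          conv_rhs => rw [← List.take_append_drop i l]
          rw [List.map_append, List.sum_append]
          omega
        have := Nat.mul_le_mul_right t h1
        omega

lemma list_exists_shift (l : List ℕ) (hpair : l.Pairwise (fun a b => b ≤ a)) (i : ℕ) :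
    ∃ t, i * t + (l.map (· - t)).sum ≤ (l.take i).sum := by
  by_cases h : l.length ≤ i
  · refine ⟨0, ?_⟩
    rw [List.take_of_length_le h]
    simp
  · push_neg at h
    have hidx := List.pairwise_iff_getElem.mp hpair
    obtain ⟨t, ht⟩ : ∃ t, t = l[i] := ⟨_, rfl⟩
    have hgei : ∀ j (hj : j < l.length), i ≤ j → l[j] ≤ t := by
      intro j hj hij
      rcases eq_or_lt_of_le hij with rfl | hlt
      · exact le_of_eq ht.symm
      · exact ht ▸ hidx i j h hj hlt
    have hlei : ∀ j (hj : j < l.length), j < i → t ≤ l[j] := by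
      intro j hj hij
      exact ht ▸ hidx j i hj h hij
    refine ⟨t, le_of_eq ?_⟩
    conv_lhs => rw [← List.take_append_drop i l]
    rw [List.map_append, List.sum_append]
    have hdrop : ((l.drop i).map (· - t)).sum = 0 := by
      apply list_sum_zero
      intro x hx
      obtain ⟨j, hj, rfl⟩ := List.getElem_of_mem hx
      rw [List.getElem_drop]
      exact hgei _ (by rw [List.length_drop] at hj; omega) (by omega)
    have htakelen : (l.take i).length = i := by
      rw [List.length_take]; omega
    have htake : ∀ x ∈ l.take i, t ≤ x := by
      intro x hx
      obtain ⟨j, hj, rfl⟩ := List.getElem_of_mem hx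
      rw [htakelen] at hj
      rw [List.getElem_take]
      exact hlei j (by omega) hj
    rw [hdrop, add_zero]
    conv_rhs => rw [← list_sum_eq (l.take i) t htake]
    rw [htakelen]

lemma exists_shift (P : Multiset ℕ) (i : ℕ) :
    ∃ t, i * t + (P.map (· - t)).sum ≤ partialSum P i := by
  obtain ⟨t, ht⟩ := list_exists_shift ((P.sort (· ≤ ·)).reverse)
    (by rw [List.pairwise_reverse]; exact Multiset.pairwise_sort (s := P) (r := (· ≤ ·))) i
  exact ⟨t, by rw [msum_eq P _, partialSum]; exact ht⟩

/-! ### Rank sequence of powers of an endomorphism -/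

open Module LinearMap

section RankPow
variable {k V : Type*} [Field k] [AddCommGroup V] [Module k V] [FiniteDimensional k V]
  (f : Module.End k V)

lemma range_pow_succ_le (p : ℕ) : range (f ^ (p + 1)) ≤ range (f ^ p) := by
  rw [pow_succ, End.mul_eq_comp, range_comp]
  exact LinearMap.map_le_range

lemma rank_pow_antitone : ∀ p q, p ≤ q →
    finrank k (range (f ^ q)) ≤ finrank k (range (f ^ p)) := by
  intro p q h
  induction q with
  | zero =>
    obtain rfl : p = 0 := by omega
    exact le_rfl
  | succ q ih =>
    rcases Nat.lt_or_ge p (q+1) with h' | h'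
    · exact le_trans (Submodule.finrank_mono (range_pow_succ_le f q)) (ih (by omega))
    · have : p = q + 1 := by omega
      subst this; rfl

lemma finrank_comap_subtype (q p : Submodule k V) :
    finrank k (Submodule.comap q.subtype p) = finrank k ↥(p ⊓ q) := by
  have h : Submodule.comap q.subtype p = Submodule.comap q.subtype (p ⊓ q) := by
    rw [Submodule.comap_inf, Submodule.comap_subtype_self, inf_top_eq]
  rw [h]
  exact (Submodule.comapSubtypeEquivOfLe inf_le_right).finrank_eq

lemma rank_pow_step (p : ℕ) :
    finrank k (range (f ^ p)) =
      finrank k (Submodule.comap (range (f ^ p)).subtype (ker f)) +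
        finrank k (range (f ^ (p + 1))) := by
  have h := LinearMap.finrank_range_add_finrank_ker (f.domRestrict (range (f ^ p)))
  rw [LinearMap.ker_domRestrict, LinearMap.range_domRestrict] at h
  have hr : Submodule.map f (range (f ^ p)) = range (f ^ (p + 1)) := by
    rw [pow_succ', End.mul_eq_comp, range_comp]
  rw [hr] at h
  omega

lemma rank_pow_convex (p : ℕ) :
    2 * finrank k (range (f ^ (p + 1))) ≤
      finrank k (range (f ^ p)) + finrank k (range (f ^ (p + 2))) := by
  have h1 := rank_pow_step f p
  have h2 := rank_pow_step f (p + 1)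
  rw [show p + 1 + 1 = p + 2 from rfl] at h2
  have hk : finrank k (Submodule.comap (range (f ^ (p+1))).subtype (ker f)) ≤
      finrank k (Submodule.comap (range (f ^ p)).subtype (ker f)) := by
    rw [finrank_comap_subtype, finrank_comap_subtype]
    exact Submodule.finrank_mono (inf_le_inf_left _ (range_pow_succ_le f p))
  omega

end RankPow

/-! ### Arithmetic key lemma -/

lemma arith_key (r : ℕ → ℕ) (hmono : ∀ p, r (p+1) ≤ r p)
    (hconv : ∀ p, 2 * r (p+1) ≤ r p + r (p+2))
    (hanti : ∀ p q, p ≤ q → r q ≤ r p) (t : ℕ) :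
    ∀ D, (∑ p ∈ Finset.range D, (r p + r (p+2) - 2 * r (p+1)) * (p + 1 - t))
        + (r D - r (D+1)) * (D - t) ≤ r t - r D := by
  intro D
  induction D with
  | zero => simp
  | succ D ih =>
    rw [Finset.sum_range_succ]
    have h1 := hmono D
    have h2 : r (D+2) ≤ r (D+1) := hmono (D+1)
    have h2b : r (D+1+1) = r (D+2) := rfl
    have h3 := hconv D
    have hb : (r D + r (D+2) - 2 * r (D+1)) + (r (D+1) - r (D+2)) = r D - r (D+1) := by omega
    rcases Nat.lt_or_ge D t with hDt | hDt
    · have e0 : D - t = 0 := by omega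
      have e1 : D + 1 - t = 0 := by omega
      rw [e0] at ih
      rw [e1]
      simp only [mul_zero, add_zero] at ih ⊢
      omega
    · have e1 : D + 1 - t = (D - t) + 1 := by omega
      rw [e1]
      have hrt : r D ≤ r t := hanti t D hDt
      have expand : (r D + r (D+2) - 2 * r (D+1)) * (D - t + 1)
            + (r (D+1) - r (D+1+1)) * (D - t + 1)
          = (r D - r (D+1)) * (D - t) + (r D - r (D+1)) := by
        rw [← add_mul, show r (D+1+1) = r (D+2) from rfl, hb, mul_add, mul_one]
      calc (∑ p ∈ Finset.range D, (r p + r (p+2) - 2 * r (p+1)) * (p + 1 - t))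
            + (r D + r (D+2) - 2 * r (D+1)) * (D - t + 1)
            + (r (D+1) - r (D+1+1)) * (D - t + 1)
          = (∑ p ∈ Finset.range D, (r p + r (p+2) - 2 * r (p+1)) * (p + 1 - t))
            + ((r D - r (D+1)) * (D - t) + (r D - r (D+1))) := by
            rw [add_assoc, expand]
        _ = ((∑ p ∈ Finset.range D, (r p + r (p+2) - 2 * r (p+1)) * (p + 1 - t))
            + (r D - r (D+1)) * (D - t)) + (r D - r (D+1)) := by rw [add_assoc]
        _ ≤ (r t - r D) + (r D - r (D+1)) := Nat.add_le_add ih le_rfl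
        _ ≤ r t - r (D+1) := by omega

section JordanSum
variable {k V : Type*} [Field k] [AddCommGroup V] [Module k V] [FiniteDimensional k V]
  (f : Module.End k V)

lemma jordan_map_sum_le (t : ℕ) :
    ((jordanType k f).map (· - t)).sum ≤ Module.finrank k (range (f ^ t)) := by
  classical
  set r : ℕ → ℕ := fun p => finrank k (range (f ^ p)) with hr
  have key := arith_key r
    (fun p => Submodule.finrank_mono (range_pow_succ_le f p))
    (fun p => rank_pow_convex f p)
    (fun p q h => rank_pow_antitone f p q h) t (finrank k V)
  rw [jordanType, Multiset.map_bind, Multiset.sum_bind]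
  have hconv : ∀ (g : ℕ → ℕ) (n : ℕ),
      ((Multiset.range n).map g).sum = ∑ p ∈ Finset.range n, g p := fun g n => rfl
  simp only [Multiset.map_replicate, Multiset.sum_replicate, smul_eq_mul]
  rw [hconv]
  calc ∑ p ∈ Finset.range (finrank k V),
        (r p + r (p+2) - 2 * r (p+1)) * (p + 1 - t)
      ≤ r t - r (finrank k V) := le_trans (Nat.le_add_right _ _) key
    _ ≤ r t := Nat.sub_le _ _

end JordanSum

/-! ### Combinatorics of the contiguous partition -/

lemma sum_map_filterMap (s : Multiset ℕ) (g : ℕ → Option ℕ) (h : ℕ → ℕ) :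
    ((s.filterMap g).map h).sum = (s.map (fun i => ((g i).map h).getD 0)).sum := by
  induction s using Multiset.induction_on with
  | empty => simp
  | cons a s ih =>
    cases hga : g a with
    | none => rw [Multiset.filterMap_cons_none _ _ hga]; simp [hga, ih]
    | some b => rw [Multiset.filterMap_cons_some _ _ _ hga]; simp [hga, ih]

lemma row_bound (H : ℕ → ℕ) (N t r : ℕ) (hH : ∀ e, N < e → H e = 0) :
    ((Finset.range (N+1)).filter (fun d => ∀ s, s ≤ t → r < H (d + s))).card
      ≤ ∑ i ∈ Finset.range (N+1),
          if (r + 1 ≤ H i) ∧ (i = 0 ∨ H (i - 1) < r + 1)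
          then (sInf {L | H (i + L) < r + 1} - t) else 0 := by
  classical
  set good := (Finset.range (N+1)).filter (fun d => ∀ s, s ≤ t → r < H (d + s)) with hgood
  set a : ℕ → ℕ := fun d => sInf {j | ∀ e, j ≤ e → e ≤ d → r < H e} with ha
  have hdN : ∀ d ∈ good, d ≤ N ∧ ∀ s, s ≤ t → r < H (d + s) := by
    intro d hd
    rw [hgood, Finset.mem_filter, Finset.mem_range] at hd
    exact ⟨by omega, hd.2⟩
  have hmem : ∀ d ∈ good, a d ∈ {j | ∀ e, j ≤ e → e ≤ d → r < H e} ∧ a d ≤ d := by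
    intro d hd
    obtain ⟨hdN', hg⟩ := hdN d hd
    have hne : d ∈ {j | ∀ e, j ≤ e → e ≤ d → r < H e} := by
      intro e he1 he2
      have : e = d := by omega
      subst this
      simpa using hg 0 (by omega)
    exact ⟨Nat.sInf_mem ⟨d, hne⟩, Nat.sInf_le hne⟩
  have hstart : ∀ d ∈ good, (r + 1 ≤ H (a d)) ∧ (a d = 0 ∨ H (a d - 1) < r + 1) := by
    intro d hd
    obtain ⟨hA, hAd⟩ := hmem d hd
    refine ⟨hA (a d) le_rfl hAd, ?_⟩
    rcases Nat.eq_zero_or_pos (a d) with h0 | hpos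
    · exact Or.inl h0
    · right
      have hlt : a d - 1 < a d := by omega
      have hnot : (a d - 1) ∉ {j | ∀ e, j ≤ e → e ≤ d → r < H e} :=
        Nat.notMem_of_lt_sInf hlt
      simp only [Set.mem_setOf_eq, not_forall] at hnot
      obtain ⟨e, he1, he2, he3⟩ := hnot
      have : e = a d - 1 := by
        by_contra hne
        exact he3 (hA e (by omega) he2)
      subst this
      omega
  have hlen : ∀ d ∈ good, d + t < a d + sInf {L | H (a d + L) < r + 1} := by
    intro d hd
    obtain ⟨hA, hAd⟩ := hmem d hd
    obtain ⟨hdN', hg⟩ := hdN d hd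
    set len := sInf {L | H (a d + L) < r + 1} with hlen'
    have hne : (N + 1) ∈ {L | H (a d + L) < r + 1} := by
      have : H (a d + (N + 1)) = 0 := hH _ (by omega)
      simp [Set.mem_setOf_eq, this]
    by_contra hcon
    push_neg at hcon
    have hlenmem : H (a d + len) < r + 1 := Nat.sInf_mem ⟨_, hne⟩
    rcases Nat.lt_or_ge (a d + len) (d + 1) with hc | hc
    · exact absurd (hA (a d + len) (by omega) (by omega)) (by omega)
    · have heq : a d + len = d + (a d + len - d) := by omega
      have h2 : r < H (d + (a d + len - d)) := hg _ (by omega)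
      rw [← heq] at h2
      omega
  have hfib : good.card = ∑ i ∈ Finset.range (N+1), (good.filter (fun d => a d = i)).card := by
    apply Finset.card_eq_sum_card_fiberwise
    intro d hd
    rw [Finset.mem_coe, Finset.mem_range]
    have := (hmem d hd).2
    have := (hdN d hd).1
    omega
  rw [hfib]
  apply Finset.sum_le_sum
  intro i _
  by_cases hcond : (r + 1 ≤ H i) ∧ (i = 0 ∨ H (i - 1) < r + 1)
  · rw [if_pos hcond]
    have hsub : good.filter (fun d => a d = i)
        ⊆ Finset.Ico i (i + (sInf {L | H (i + L) < r + 1} - t)) := by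
      intro d hd
      rw [Finset.mem_filter] at hd
      obtain ⟨hdg, hai⟩ := hd
      have h1 := (hmem d hdg).2
      have h2 := hlen d hdg
      rw [hai] at h1 h2
      rw [Finset.mem_Ico]
      omega
    calc (good.filter (fun d => a d = i)).card ≤ _ := Finset.card_le_card hsub
      _ = _ := by rw [Nat.card_Ico]; omega
  · rw [if_neg hcond]
    simp only [Nat.le_zero, Finset.card_eq_zero, Finset.filter_eq_empty_iff]
    intro d hd
    intro hai
    exact hcond (hai ▸ hstart d hd)

lemma comb_key (H : ℕ → ℕ) (N t : ℕ) (hH : ∀ e, N < e → H e = 0)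
    (W : ℕ → ℕ) (hW : ∀ d s, s ≤ t → W d ≤ H (d + s)) :
    ∑ d ∈ Finset.range (N+1), W d ≤ ((contiguousPartition H N).map (· - t)).sum := by
  classical
  have h1 : ∀ (g : ℕ → ℕ) (n : ℕ),
      ((Multiset.range n).map g).sum = ∑ p ∈ Finset.range n, g p := fun g n => rfl
  have hRHS : ((contiguousPartition H N).map (· - t)).sum
      = ∑ r ∈ Finset.range ((Finset.range (N + 1)).sup H), ∑ i ∈ Finset.range (N+1),
          (if (r + 1 ≤ H i) ∧ (i = 0 ∨ H (i - 1) < r + 1)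
           then (sInf {L | H (i + L) < r + 1} - t) else 0) := by
    rw [contiguousPartition, Multiset.map_bind, Multiset.sum_bind, h1]
    apply Finset.sum_congr rfl
    intro r _
    rw [sum_map_filterMap, h1]
    apply Finset.sum_congr rfl
    intro i _
    by_cases hc : (r + 1 ≤ H i) ∧ (i = 0 ∨ H (i - 1) < r + 1)
    · rw [if_pos hc, if_pos hc]; rfl
    · rw [if_neg hc, if_neg hc]; rfl
  rw [hRHS]
  have hWd : ∀ d ∈ Finset.range (N+1), W d ≤ (Finset.range (N + 1)).sup H := by
    intro d hd
    calc W d ≤ H (d + 0) := hW d 0 (by omega)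
      _ = H d := by rw [add_zero]
      _ ≤ _ := Finset.le_sup hd
  calc ∑ d ∈ Finset.range (N+1), W d
      = ∑ d ∈ Finset.range (N+1), ∑ r ∈ Finset.range ((Finset.range (N + 1)).sup H),
          (if r < W d then 1 else 0) := by
        apply Finset.sum_congr rfl
        intro d hd
        rw [← Finset.card_filter]
        have : (Finset.range ((Finset.range (N + 1)).sup H)).filter (fun r => r < W d)
            = Finset.range (W d) := by
          ext r
          simp only [Finset.mem_filter, Finset.mem_range]
          constructor
          · rintro ⟨_, h⟩; exact h
          · intro h; exact ⟨lt_of_lt_of_le h (hWd d hd), h⟩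
        rw [this, Finset.card_range]
    _ = ∑ r ∈ Finset.range ((Finset.range (N + 1)).sup H), ∑ d ∈ Finset.range (N+1),
          (if r < W d then 1 else 0) := Finset.sum_comm
    _ ≤ _ := by
        apply Finset.sum_le_sum
        intro r _
        calc ∑ d ∈ Finset.range (N+1), (if r < W d then 1 else 0)
            = ((Finset.range (N+1)).filter (fun d => r < W d)).card := by
              rw [Finset.card_filter]
          _ ≤ ((Finset.range (N+1)).filter (fun d => ∀ s, s ≤ t → r < H (d + s))).card := by
              apply Finset.card_le_card
              intro d hd
              rw [Finset.mem_filter] at hd ⊢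
              exact ⟨hd.1, fun s hs => lt_of_lt_of_le hd.2 (hW d s hs)⟩
          _ ≤ _ := row_bound H N t r hH

/-! ### The graded rank bound -/

section Graded
variable {k A : Type*} [Field k] [CommRing A] [Algebra k A]
    (𝒜 : ℕ → Submodule k A) [GradedAlgebra 𝒜]
    {M : Type*} [AddCommGroup M] [Module A M] [Module k M] [IsScalarTower k A M]
    [Module.Finite k M]
    (ℳ : ℕ → Submodule k M) [SetLike.GradedSMul 𝒜 ℳ] [DirectSum.Decomposition ℳ]

lemma lsmul_pow (ℓ : A) (t : ℕ) :
    (((LinearMap.lsmul A M ℓ).restrictScalars k : Module.End k M) ^ t)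
      = (LinearMap.lsmul A M (ℓ ^ t)).restrictScalars k := by
  induction t with
  | zero => ext x; simp
  | succ t ih =>
    ext x
    rw [pow_succ, End.mul_eq_comp]
    simp only [coe_comp, Function.comp_apply, restrictScalars_apply, lsmul_apply, ih]
    rw [smul_smul, pow_succ]

lemma map_lsmul_pow_le (ℓ : A) (hℓ : ℓ ∈ 𝒜 1) (s d : ℕ) :
    (ℳ d).map (((LinearMap.lsmul A M ℓ).restrictScalars k : Module.End k M) ^ s)
      ≤ ℳ (s + d) := by
  rw [lsmul_pow]
  rintro y ⟨x, hx, rfl⟩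
  have hl : ℓ ^ s ∈ 𝒜 s := by simpa using SetLike.pow_mem_graded s hℓ
  simpa using SetLike.GradedSMul.smul_mem hl hx

lemma finrank_map_lsmul_pow_le (ℓ : A) (hℓ : ℓ ∈ 𝒜 1) (t d s : ℕ) (hs : s ≤ t) :
    finrank k ((ℳ d).map (((LinearMap.lsmul A M ℓ).restrictScalars k : Module.End k M) ^ t))
      ≤ finrank k (ℳ (d + s)) := by
  set f := ((LinearMap.lsmul A M ℓ).restrictScalars k : Module.End k M) with hf
  have hsplit : f ^ t = (f ^ (t - s)) * (f ^ s) := by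
    rw [← pow_add]
    congr 1
    omega
  rw [hsplit, End.mul_eq_comp, Submodule.map_comp]
  have hds : d + s = s + d := by omega
  rw [hds]
  calc finrank k ((((ℳ d).map (f ^ s))).map (f ^ (t - s)))
      ≤ finrank k ((ℳ (s + d)).map (f ^ (t - s))) :=
        Submodule.finrank_mono (Submodule.map_mono (map_lsmul_pow_le 𝒜 ℳ ℓ hℓ s d))
    _ ≤ finrank k (ℳ (s + d)) := Submodule.finrank_map_le _ _

lemma finrank_finset_sup_le {k V : Type*} [Field k] [AddCommGroup V] [Module k V]
    [FiniteDimensional k V] (s : Finset ℕ) (g : ℕ → Submodule k V) :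
    finrank k ↥(s.sup g) ≤ ∑ d ∈ s, finrank k (g d) := by
  classical
  induction s using Finset.induction_on with
  | empty => simp
  | @insert a s ha ih =>
    rw [Finset.sup_insert, Finset.sum_insert ha]
    have hsup := Submodule.finrank_sup_add_finrank_inf_eq (g a) (s.sup g)
    omega

lemma finrank_range_pow_le (ℓ : A) (N : ℕ) (hN : ∀ i, N < i → ℳ i = ⊥) (t : ℕ) :
    finrank k (range (((LinearMap.lsmul A M ℓ).restrictScalars k : Module.End k M) ^ t))
      ≤ ∑ d ∈ Finset.range (N+1),
          finrank k ((ℳ d).map (((LinearMap.lsmul A M ℓ).restrictScalars k : Module.End k M) ^ t)) := by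
  classical
  set f := ((LinearMap.lsmul A M ℓ).restrictScalars k : Module.End k M) with hf
  have htop : (⨆ d, ℳ d) = ⊤ :=
    (DirectSum.Decomposition.isInternal ℳ).submodule_iSup_eq_top
  have hrange : range (f ^ t) = ⨆ d, (ℳ d).map (f ^ t) := by
    rw [range_eq_map, ← htop, Submodule.map_iSup]
  have hle : range (f ^ t) ≤ (Finset.range (N+1)).sup (fun d => (ℳ d).map (f ^ t)) := by
    rw [hrange]
    apply iSup_le
    intro d
    rcases Nat.lt_or_ge d (N+1) with hd | hd
    · exact Finset.le_sup (f := fun d => (ℳ d).map (f ^ t)) (Finset.mem_range.mpr hd)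
    · rw [hN d (by omega), Submodule.map_bot]
      exact bot_le
  calc finrank k (range (f ^ t)) ≤ finrank k ↥((Finset.range (N+1)).sup (fun d => (ℳ d).map (f ^ t))) :=
        Submodule.finrank_mono hle
    _ ≤ ∑ d ∈ Finset.range (N+1), finrank k ((ℳ d).map (f ^ t)) :=
        finrank_finset_sup_le _ _

end Graded

/-! ## Statement 10 -/

theorem jordan_type_le_contiguous_partition
    (k A : Type*) [Field k] [CommRing A] [Algebra k A] [IsArtinianRing A]
    (𝒜 : ℕ → Submodule k A) [GradedAlgebra 𝒜]
    (M : Type*) [AddCommGroup M] [Module A M] [Module k M] [IsScalarTower k A M]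
    [Module.Finite k M]
    (ℳ : ℕ → Submodule k M) [SetLike.GradedSMul 𝒜 ℳ] [DirectSum.Decomposition ℳ]
    (N : ℕ) (hN : ∀ i, N < i → ℳ i = ⊥)
    (ℓ : A) (hℓ : ℓ ∈ 𝒜 1) :
    DomLE (jordanType k ((LinearMap.lsmul A M ℓ).restrictScalars k))
      (contiguousPartition (fun i => Module.finrank k (ℳ i)) N) := by
  intro i
  set f := ((LinearMap.lsmul A M ℓ).restrictScalars k : Module.End k M) with hf
  set H : ℕ → ℕ := fun d => finrank k (ℳ d) with hH
  obtain ⟨t, ht⟩ := exists_shift (contiguousPartition H N) i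
  have hHzero : ∀ e, N < e → H e = 0 := by
    intro e he
    rw [hH]
    simp only
    rw [hN e he]
    exact finrank_bot k M
  have hW : ∀ d s, s ≤ t → finrank k ((ℳ d).map (f ^ t)) ≤ H (d + s) :=
    fun d s hs => finrank_map_lsmul_pow_le 𝒜 ℳ ℓ hℓ t d s hs
  calc partialSum (jordanType k f) i
      ≤ i * t + ((jordanType k f).map (· - t)).sum := partialSum_le_mul_add _ i t
    _ ≤ i * t + finrank k (range (f ^ t)) :=
        Nat.add_le_add le_rfl (jordan_map_sum_le f t)
    _ ≤ i * t + ∑ d ∈ Finset.range (N+1), finrank k ((ℳ d).map (f ^ t)) :=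
        Nat.add_le_add le_rfl (finrank_range_pow_le ℳ ℓ N hN t)
    _ ≤ i * t + ((contiguousPartition H N).map (· - t)).sum :=
        Nat.add_le_add le_rfl (comb_key H N t hHzero _ hW)
    _ ≤ partialSum (contiguousPartition H N) i := ht
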